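/- Let a, b, c > 0 satisfy the hyperbolic triangle inequality constraints with a ≤ c. Then (cosh a · cosh b - cosh c)/(sinh a · sinh b) ≤ tanh(b/2)/tanh(a), and hence this quantity is at most b/(2 tanh a). -/

import Mathlib

open Real

lemma sinh_le_mul_cosh {x : ℝ} (hx : 0 ≤ x) : Real.sinh x ≤ x * Real.cosh x := by
  have H : MonotoneOn (fun y : ℝ => y * Real.cosh y - Real.sinh y) (Set.Ici 0) := by
    apply monotoneOn_of_deriv_nonneg (convex_Ici 0)
    · fun_prop
    · intro y hy
      exact ((hasDerivAt_id y).mul (Real.hasDerivAt_cosh y)).sub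
        (Real.hasDerivAt_sinh y) |>.differentiableAt.differentiableWithinAt
    · intro y hy
      rw [interior_Ici, Set.mem_Ioi] at hy
      have hd : HasDerivAt (fun y : ℝ => y * Real.cosh y - Real.sinh y)
          (1 * Real.cosh y + y * Real.sinh y - Real.cosh y) y :=
        (((hasDerivAt_id y).mul (Real.hasDerivAt_cosh y)).sub (Real.hasDerivAt_sinh y))
      rw [hd.deriv]
      have : 0 ≤ y * Real.sinh y := mul_nonneg hy.le ((Real.sinh_pos_iff.2 hy)).le
      linarith
  have := H (Set.self_mem_Ici) (Set.mem_Ici.2 hx) hx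
  simpa using this

theorem hyperbolic_cos_angle_bound (a b c : ℝ) (ha : 0 < a) (hb : 0 < b)
    (hac : a ≤ c) :
    (Real.cosh a * Real.cosh b - Real.cosh c) / (Real.sinh a * Real.sinh b) ≤
      Real.tanh (b / 2) / Real.tanh a ∧
    (Real.cosh a * Real.cosh b - Real.cosh c) / (Real.sinh a * Real.sinh b) ≤
      b / (2 * Real.tanh a) := by
  have sa : 0 < Real.sinh a := Real.sinh_pos_iff.2 ha
  have sb : 0 < Real.sinh b := Real.sinh_pos_iff.2 hb
  have ca : 0 < Real.cosh a := Real.cosh_pos a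
  have cb2 : 0 < Real.cosh (b / 2) := Real.cosh_pos _
  have ta : 0 < Real.tanh a := by
    rw [Real.tanh_eq_sinh_div_cosh]; positivity
  have hcc : Real.cosh a ≤ Real.cosh c := by
    rw [Real.cosh_le_cosh, abs_of_pos ha, abs_of_pos (lt_of_lt_of_le ha hac)]
    exact hac
  -- key identity: tanh(b/2)/tanh a = cosh a * (cosh b - 1) / (sinh a * sinh b)
  have hb2 : Real.cosh b = 2 * Real.cosh (b / 2) ^ 2 - 1 := by
    have h := Real.cosh_two_mul (b / 2); rw [show 2 * (b / 2) = b by ring] at h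
    have := Real.cosh_sq (b / 2); nlinarith [Real.cosh_sq (b / 2)]
  have hs2 : Real.sinh b = 2 * Real.sinh (b / 2) * Real.cosh (b / 2) := by
    have := Real.sinh_two_mul (b / 2); rw [show 2 * (b / 2) = b by ring] at this; linarith
  have hsq : Real.cosh (b / 2) ^ 2 = Real.sinh (b / 2) ^ 2 + 1 := Real.cosh_sq _
  have hid : Real.tanh (b / 2) / Real.tanh a =
      Real.cosh a * (Real.cosh b - 1) / (Real.sinh a * Real.sinh b) := by
    rw [Real.tanh_eq_sinh_div_cosh, Real.tanh_eq_sinh_div_cosh, hb2, hs2]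
    field_simp
    linear_combination (-2) * hsq
  have h1 : (Real.cosh a * Real.cosh b - Real.cosh c) / (Real.sinh a * Real.sinh b) ≤
      Real.tanh (b / 2) / Real.tanh a := by
    rw [hid]
    apply div_le_div_of_nonneg_right _ (by positivity)
    nlinarith [Real.one_le_cosh b]
  refine ⟨h1, h1.trans ?_⟩
  rw [div_le_div_iff₀ ta (by positivity), Real.tanh_eq_sinh_div_cosh]
  have key : Real.sinh (b / 2) ≤ (b / 2) * Real.cosh (b / 2) :=
    sinh_le_mul_cosh (by positivity)
  rw [div_mul_eq_mul_div, div_le_iff₀ cb2]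
  nlinarith
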